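/- Fix (ξ, η) ∈ ℝ². For h ≠ 0 define the weighted-average discrete Laplacian symbol S(h) = (2/3)·[4 sin²(ξh/2) + 4 sin²(ηh/2)]/h² + (1/3)·[4 sin²((ξ+η)h/2) + 4 sin²((ξ−η)h/2)]/(2h²). Then as h → 0, S(h) = (ξ² + η²) − (h²/12)(ξ² + η²)² + O(h⁴); in particular the leading h² error term depends only on ξ² + η² and is therefore rotation-invariant (isotropic). -/

import Mathlib

open Asymptotics Filter Topology Real

private lemma cos_taylor6_bound {x : ℝ} (hx : |x| ≤ 1) :
    |Real.cos x - (1 - x ^ 2 / 2 + x ^ 4 / 24)| ≤ |x| ^ 6 := by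
  have h1 : Real.cos x = (Complex.exp (x * Complex.I)).re := by
    rw [Complex.exp_mul_I]
    simp [Complex.cos_ofReal_re]
  have h2 : ((∑ m ∈ Finset.range 6, (x * Complex.I) ^ m / m.factorial)).re
      = 1 - x ^ 2 / 2 + x ^ 4 / 24 := by
    simp [Finset.sum_range_succ, Complex.div_re, Complex.normSq, pow_succ, Nat.factorial]
    ring
  have key : Real.cos x - (1 - x ^ 2 / 2 + x ^ 4 / 24)
      = (Complex.exp (x * Complex.I) - ∑ m ∈ Finset.range 6, (x * Complex.I) ^ m / m.factorial).re := by
    rw [Complex.sub_re, h1, h2]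
  rw [key]
  have habs : ‖(x : ℂ) * Complex.I‖ = |x| := by simp
  calc |(Complex.exp (x * Complex.I) - ∑ m ∈ Finset.range 6, (x * Complex.I) ^ m / m.factorial).re|
      ≤ ‖Complex.exp (x * Complex.I) - ∑ m ∈ Finset.range 6, (x * Complex.I) ^ m / m.factorial‖ :=
        Complex.abs_re_le_norm _
    _ ≤ ‖(x : ℂ) * Complex.I‖ ^ 6 * ((6 : ℕ).succ * ((6 : ℕ).factorial * 6 : ℝ)⁻¹) :=
        Complex.exp_bound (by rwa [habs]) (by norm_num)
    _ ≤ |x| ^ 6 := by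
        rw [habs]
        have hc : ((6 : ℕ).succ * ((6 : ℕ).factorial * 6 : ℝ)⁻¹) ≤ 1 := by
          norm_num [Nat.factorial]
        nlinarith [pow_nonneg (abs_nonneg x) 6]

private lemma cos_taylor6_isBigO :
    (fun t : ℝ => Real.cos t - (1 - t ^ 2 / 2 + t ^ 4 / 24)) =O[𝓝 (0 : ℝ)] (fun t => t ^ 6) := by
  rw [Asymptotics.isBigO_iff]
  refine ⟨1, ?_⟩
  have h : ∀ᶠ t : ℝ in 𝓝 0, |t| ≤ 1 := by
    have := Metric.ball_mem_nhds (0 : ℝ) one_pos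
    filter_upwards [this] with t ht
    rw [Metric.mem_ball, Real.dist_eq, sub_zero] at ht
    exact ht.le
  filter_upwards [h] with t ht
  have := cos_taylor6_bound ht
  simpa [abs_pow] using this

private lemma F_isBigO (a : ℝ) :
    (fun h : ℝ => 4 * Real.sin (a * h / 2) ^ 2 - (a ^ 2 * h ^ 2 - a ^ 4 * h ^ 4 / 12))
      =O[𝓝 (0 : ℝ)] (fun h => h ^ 6) := by
  have htend : Filter.Tendsto (fun h : ℝ => a * h) (𝓝 0) (𝓝 0) := by
    simpa using (continuous_mul_left a).tendsto (0 : ℝ)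
  have h1 := (cos_taylor6_isBigO.comp_tendsto htend).const_mul_left (-2)
  have heq : (fun h : ℝ => 4 * Real.sin (a * h / 2) ^ 2 - (a ^ 2 * h ^ 2 - a ^ 4 * h ^ 4 / 12))
      = fun h => (-2) * ((fun t : ℝ => Real.cos t - (1 - t ^ 2 / 2 + t ^ 4 / 24)) ((fun h : ℝ => a * h) h)) := by
    funext h
    have hs : Real.sin (a * h / 2) ^ 2 = 1 / 2 - Real.cos (2 * (a * h / 2)) / 2 :=
      Real.sin_sq_eq_half_sub _
    have : (2 : ℝ) * (a * h / 2) = a * h := by ring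
    rw [hs, this]
    ring
  rw [heq]
  refine IsBigO.trans h1 ?_
  have hc : ((fun t : ℝ => t ^ 6) ∘ fun h : ℝ => a * h) = fun h : ℝ => a ^ 6 * h ^ 6 := by
    funext h; simp [Function.comp]; ring
  rw [hc]
  exact (Asymptotics.isBigO_const_mul_self (a ^ 6) (fun h : ℝ => h ^ 6) _)

/-- the weighted-average (2/3 axis + 1/3 diagonal) discrete Laplacian symbol
satisfies `S(h) = (ξ²+η²) − (h²/12)(ξ²+η²)² + O(h⁴)` as `h → 0`; the leading error depends
only on `ξ²+η²` and is hence isotropic. -/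
theorem weighted_laplacian_symbol_isotropic (ξ η : ℝ) :
    (fun h : ℝ =>
        ((2/3) * ((4 * Real.sin (ξ*h/2) ^ 2 + 4 * Real.sin (η*h/2) ^ 2) / h ^ 2)
          + (1/3) * ((4 * Real.sin ((ξ+η)*h/2) ^ 2 + 4 * Real.sin ((ξ-η)*h/2) ^ 2) / (2 * h ^ 2)))
        - ((ξ ^ 2 + η ^ 2) - (h ^ 2 / 12) * (ξ ^ 2 + η ^ 2) ^ 2))
      =O[𝓝[≠] (0:ℝ)] (fun h : ℝ => h ^ 4) := by
  set F : ℝ → ℝ → ℝ := fun a h =>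
    4 * Real.sin (a * h / 2) ^ 2 - (a ^ 2 * h ^ 2 - a ^ 4 * h ^ 4 / 12) with hF
  have hG : (fun h : ℝ => (2/3) * F ξ h + (2/3) * F η h + (1/6) * F (ξ+η) h + (1/6) * F (ξ-η) h)
      =O[𝓝[≠] (0:ℝ)] (fun h => h ^ 6) := by
    have := ((((F_isBigO ξ).const_mul_left (2/3)).add
      ((F_isBigO η).const_mul_left (2/3))).add
      ((F_isBigO (ξ+η)).const_mul_left (1/6))).add
      ((F_isBigO (ξ-η)).const_mul_left (1/6))
    exact this.mono nhdsWithin_le_nhds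
  have hmul := hG.mul (Asymptotics.isBigO_refl (fun h : ℝ => (h ^ 2)⁻¹) (𝓝[≠] (0:ℝ)))
  have hright : (fun h : ℝ => h ^ 6 * (h ^ 2)⁻¹) =ᶠ[𝓝[≠] (0:ℝ)] (fun h => h ^ 4) := by
    filter_upwards [self_mem_nhdsWithin] with h (hh : h ≠ 0)
    field_simp
  have hleft : (fun h : ℝ =>
        ((2/3) * ((4 * Real.sin (ξ*h/2) ^ 2 + 4 * Real.sin (η*h/2) ^ 2) / h ^ 2)
          + (1/3) * ((4 * Real.sin ((ξ+η)*h/2) ^ 2 + 4 * Real.sin ((ξ-η)*h/2) ^ 2) / (2 * h ^ 2)))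
        - ((ξ ^ 2 + η ^ 2) - (h ^ 2 / 12) * (ξ ^ 2 + η ^ 2) ^ 2))
      =ᶠ[𝓝[≠] (0:ℝ)] (fun h =>
        ((2/3) * F ξ h + (2/3) * F η h + (1/6) * F (ξ+η) h + (1/6) * F (ξ-η) h) * (h ^ 2)⁻¹) := by
    filter_upwards [self_mem_nhdsWithin] with h (hh : h ≠ 0)
    simp only [hF]
    field_simp
    ring
  calc (fun h : ℝ =>
        ((2/3) * ((4 * Real.sin (ξ*h/2) ^ 2 + 4 * Real.sin (η*h/2) ^ 2) / h ^ 2)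
          + (1/3) * ((4 * Real.sin ((ξ+η)*h/2) ^ 2 + 4 * Real.sin ((ξ-η)*h/2) ^ 2) / (2 * h ^ 2)))
        - ((ξ ^ 2 + η ^ 2) - (h ^ 2 / 12) * (ξ ^ 2 + η ^ 2) ^ 2))
      =O[𝓝[≠] (0:ℝ)] (fun h : ℝ => h ^ 6 * (h ^ 2)⁻¹) := hleft.trans_isBigO hmul
    _ =O[𝓝[≠] (0:ℝ)] (fun h : ℝ => h ^ 4) := hright.isBigO
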